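/- Let q > 1 and m > −1 be real and k ≥ 0 an integer. Then there exist real numbers a_0, …, a_k with a_k ≠ 0, satisfying (with the convention a_{k+1} = a_{k+2} = 0) the recurrence (q^{−i} − q^{−k})a_i − (1 + q^{−m})(q^{−1−i} − 1)a_{i+1} + (q^{−2−i−m} − q^{−m} + q^{i+1−m} − q^{−1−m})a_{i+2} = 0 for all 0 ≤ i ≤ k, such that the nonzero sequence ν defined by ν(l) := π_m(l)·Σ_{i=0}^{k} a_i q^{il} satisfies ν(l−1)P_m(l−1,l) + ν(l)P_m(l,l) + ν(l+1)P_m(l+1,l) = q^{−k}·ν(l) for all l ≥ 0 (the l−1 term being omitted when l = 0); that is, ν is an eigenvector of P_m with eigenvalue q^{−k}. -/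

import Mathlib

noncomputable section

/-- The tridiagonal transition matrix `P_m` for real `q > 1`, `m > -1`. -/
def Pm (q m : ℝ) (i j : ℕ) : ℝ :=
  if j = i + 1 then q ^ (-1 - 2 * (i : ℝ) - m)
  else if j = i then
    1 - (1 - q ^ (-(i : ℝ))) * (1 - q ^ (-m - (i : ℝ))) - q ^ (-1 - 2 * (i : ℝ) - m)
  else if i = j + 1 then (1 - q ^ (-(i : ℝ))) * (1 - q ^ (-m - (i : ℝ)))
  else 0

/-- Unnormalized weight `q^{-i(i+m)} / (η_i(q)·∏_{j=1}^{i}(1-q^{-m-j}))`. -/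
def piWt (q m : ℝ) (i : ℕ) : ℝ :=
  q ^ (-((i : ℝ) * ((i : ℝ) + m))) /
    ((∏ j ∈ Finset.range i, (1 - q ^ (-((j : ℝ) + 1)))) *
      ∏ j ∈ Finset.range i, (1 - q ^ (-m - ((j : ℝ) + 1))))

/-- The stationary distribution `π_m`, normalized so that it sums to `1`. -/
def piM (q m : ℝ) (i : ℕ) : ℝ := (∑' k : ℕ, piWt q m k)⁻¹ * piWt q m i

namespace Stmt5Aux

def c0 (q : ℝ) (k i : ℕ) : ℝ := q ^ (-(i : ℝ)) - q ^ (-(k : ℝ))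
def c1 (q m : ℝ) (i : ℕ) : ℝ := -((1 + q ^ (-m)) * (q ^ (-(i : ℝ)) - 1))
def c2 (q m : ℝ) (i : ℕ) : ℝ :=
  (q ^ (-(i : ℝ)) - 1) * q ^ (-m) + q ^ (-1 - m) * (q ^ ((i : ℝ)) - 1)

def bPair (q m : ℝ) (k : ℕ) : ℕ → ℝ × ℝ
  | 0 => (1, 0)
  | j + 1 =>
      ((c1 q m (k - j) * (bPair q m k j).1 + c2 q m (k - j + 1) * (bPair q m k j).2)
          * (-(c0 q k (k - j - 1)))⁻¹,
        (bPair q m k j).1)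

def aCoef (q m : ℝ) (k i : ℕ) : ℝ := if i ≤ k then (bPair q m k (k - i)).1 else 0

def Qx (q m : ℝ) (k : ℕ) (t : ℝ) : ℝ :=
  ∑ i ∈ Finset.range (k + 3), aCoef q m k i * q ^ ((i : ℝ) * t)

theorem aCoef_k (q m : ℝ) (k : ℕ) : aCoef q m k k = 1 := by
  simp [aCoef, bPair]

theorem aCoef_gt (q m : ℝ) (k i : ℕ) (h : k < i) : aCoef q m k i = 0 := by
  simp [aCoef, Nat.not_le.mpr h]

theorem c1_zero (q m : ℝ) : c1 q m 0 = 0 := by simp [c1]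
theorem c2_zero (q m : ℝ) : c2 q m 0 = 0 := by simp [c2]
theorem c2_one (q m : ℝ) (hq : 1 < q) : c2 q m 1 = 0 := by
  have hq0 : (0:ℝ) < q := lt_trans one_pos hq
  have hqne : q ≠ 0 := ne_of_gt hq0
  rw [c2, Nat.cast_one, Real.rpow_one, show (-1 - m : ℝ) = -1 + -m by ring,
    Real.rpow_add hq0, Real.rpow_neg_one]
  field_simp
  ring

theorem recA (q m : ℝ) (hq : 1 < q) (k : ℕ) (i : ℕ) :
    c0 q k i * aCoef q m k i + c1 q m (i + 1) * aCoef q m k (i + 1)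
      + c2 q m (i + 2) * aCoef q m k (i + 2) = 0 := by
  have hq0 : (0 : ℝ) < q := lt_trans one_pos hq
  rcases lt_trichotomy i k with hik | hik | hik
  · have hc0 : c0 q k i ≠ 0 := by
      have : q ^ (-(k : ℝ)) < q ^ (-(i : ℝ)) := by
        apply Real.rpow_lt_rpow_left_iff hq |>.mpr
        simp only [neg_lt_neg_iff]
        exact_mod_cast hik
      exact ne_of_gt (sub_pos.mpr this)
    set j := k - i - 1 with hj
    have hki : k - i = j + 1 := by omega
    have h1 : k - j = i + 1 := by omega
    have ha : aCoef q m k i = (c1 q m (i + 1) * (bPair q m k j).1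
        + c2 q m (i + 2) * (bPair q m k j).2) * (-(c0 q k i))⁻¹ := by
      rw [aCoef, if_pos (le_of_lt hik), hki, bPair, h1]
      rfl
    have ha1 : aCoef q m k (i + 1) = (bPair q m k j).1 := by
      rw [aCoef, if_pos (by omega : i + 1 ≤ k)]
      have e : k - (i + 1) = j := by omega
      rw [e]
    have ha2 : aCoef q m k (i + 2) = (bPair q m k j).2 := by
      rcases le_or_gt (i + 2) k with h | h
      · rw [aCoef, if_pos h]
        have hjj : j = (k - i - 2) + 1 := by omega
        rw [hjj, bPair]
        rfl
      · have hj0 : j = 0 := by omega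
        rw [aCoef, if_neg (by omega), hj0, bPair]
    have key : ∀ A B : ℝ, A ≠ 0 → A * (B * (-A)⁻¹) + B = 0 := by
      intro A B hA
      rw [← neg_inv]
      field_simp
      ring
    have hk2 := key (c0 q k i)
      (c1 q m (i + 1) * (bPair q m k j).1 + c2 q m (i + 2) * (bPair q m k j).2) hc0
    rw [ha, ha1, ha2]
    linarith [hk2]
  · simp [hik, show c0 q k k = 0 from sub_self _, aCoef_gt q m k (k+1) (by omega),
      aCoef_gt q m k (k+2) (by omega)]
  · rw [aCoef_gt q m k i hik, aCoef_gt q m k (i+1) (by omega), aCoef_gt q m k (i+2) (by omega)]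
    ring

theorem Gident (q m : ℝ) (hq : 1 < q) (k i : ℕ) (t : ℝ) :
    (1 - q ^ (-t)) * (1 - q ^ (-m - t)) * q ^ ((i : ℝ) * (t - 1))
      + (1 - (1 - q ^ (-t)) * (1 - q ^ (-m - t)) - q ^ (-1 - 2 * t - m)) * q ^ ((i : ℝ) * t)
      + q ^ (-1 - 2 * t - m) * q ^ ((i : ℝ) * (t + 1))
      - q ^ (-(k : ℝ)) * q ^ ((i : ℝ) * t)
    = c0 q k i * q ^ ((i : ℝ) * t) + c1 q m i * q ^ (((i : ℝ) - 1) * t)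
      + c2 q m i * q ^ (((i : ℝ) - 2) * t) := by
  have hq0 : (0 : ℝ) < q := lt_trans one_pos hq
  have hq0' : (0 : ℝ) ≤ q := le_of_lt hq0
  have hX : (0:ℝ) < q ^ t := Real.rpow_pos_of_pos hq0 t
  have hY : (0:ℝ) < q ^ (i : ℝ) := Real.rpow_pos_of_pos hq0 _
  have hV : (0:ℝ) < q ^ m := Real.rpow_pos_of_pos hq0 m
  have e1 : q ^ (-t) = (q ^ t)⁻¹ := Real.rpow_neg hq0' t
  have e2 : q ^ (-m - t) = (q ^ m * q ^ t)⁻¹ := by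
    rw [show -m - t = -(m + t) by ring, Real.rpow_neg hq0', Real.rpow_add hq0]
  have e3 : q ^ (-1 - 2 * t - m) = (q * (q ^ t * (q ^ t * q ^ m)))⁻¹ := by
    rw [show -1 - 2 * t - m = -(1 + (t + (t + m))) by ring, Real.rpow_neg hq0',
      Real.rpow_add hq0, Real.rpow_add hq0, Real.rpow_add hq0, Real.rpow_one]
  have e4 : q ^ ((i : ℝ) * (t - 1)) = q ^ ((i : ℝ) * t) * (q ^ (i : ℝ))⁻¹ := by
    rw [show (i : ℝ) * (t - 1) = (i : ℝ) * t + (-(i : ℝ)) by ring, Real.rpow_add hq0,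
      Real.rpow_neg hq0']
  have e5 : q ^ ((i : ℝ) * (t + 1)) = q ^ ((i : ℝ) * t) * q ^ (i : ℝ) := by
    rw [show (i : ℝ) * (t + 1) = (i : ℝ) * t + (i : ℝ) by ring, Real.rpow_add hq0]
  have e6 : q ^ (((i : ℝ) - 1) * t) = q ^ ((i : ℝ) * t) * (q ^ t)⁻¹ := by
    rw [show ((i : ℝ) - 1) * t = (i : ℝ) * t + (-t) by ring, Real.rpow_add hq0,
      Real.rpow_neg hq0']
  have e7 : q ^ (((i : ℝ) - 2) * t) = q ^ ((i : ℝ) * t) * ((q ^ t)⁻¹ * (q ^ t)⁻¹) := by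
    rw [show ((i : ℝ) - 2) * t = (i : ℝ) * t + (-t + -t) by ring, Real.rpow_add hq0,
      Real.rpow_add hq0, Real.rpow_neg hq0']
  have e8 : q ^ (-(i : ℝ)) = (q ^ (i : ℝ))⁻¹ := Real.rpow_neg hq0' _
  have e9 : q ^ (-m) = (q ^ m)⁻¹ := Real.rpow_neg hq0' m
  have e10 : q ^ (-1 - m : ℝ) = (q * q ^ m)⁻¹ := by
    rw [show -1 - m = -(1 + m) by ring, Real.rpow_neg hq0', Real.rpow_add hq0, Real.rpow_one]
  rw [c0, c1, c2, e1, e2, e3, e4, e5, e6, e7, e8, e9, e10]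
  field_simp
  ring

theorem sumS1 (q m : ℝ) (hq : 1 < q) (k : ℕ) (t : ℝ) :
    ∑ i ∈ Finset.range (k + 3),
      (c0 q k i * aCoef q m k i * q ^ ((i : ℝ) * t)
        + c1 q m i * aCoef q m k i * q ^ (((i : ℝ) - 1) * t)
        + c2 q m i * aCoef q m k i * q ^ (((i : ℝ) - 2) * t)) = 0 := by
  rw [Finset.sum_add_distrib, Finset.sum_add_distrib]
  have h0 : ∑ i ∈ Finset.range (k + 3), c0 q k i * aCoef q m k i * q ^ ((i : ℝ) * t)
      = ∑ i ∈ Finset.range (k + 1), c0 q k i * aCoef q m k i * q ^ ((i : ℝ) * t) := by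
    rw [show k + 3 = (k + 2) + 1 from rfl, Finset.sum_range_succ,
      show k + 2 = (k + 1) + 1 from rfl, Finset.sum_range_succ,
      aCoef_gt q m k (k + 1) (by omega), aCoef_gt q m k (k + 2) (by omega)]
    ring
  have h1 : ∑ i ∈ Finset.range (k + 3), c1 q m i * aCoef q m k i * q ^ (((i : ℝ) - 1) * t)
      = ∑ i ∈ Finset.range (k + 1),
          c1 q m (i + 1) * aCoef q m k (i + 1) * q ^ ((i : ℝ) * t) := by
    rw [show k + 3 = (k + 2) + 1 from rfl, Finset.sum_range_succ', c1_zero,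
      Finset.sum_range_succ, aCoef_gt q m k (k + 2) (by omega)]
    simp only [zero_mul, mul_zero, add_zero]
    apply Finset.sum_congr rfl
    intro i _
    have e : ((i + 1 : ℕ) : ℝ) - 1 = (i : ℝ) := by push_cast; ring
    rw [e]
  have h2 : ∑ i ∈ Finset.range (k + 3), c2 q m i * aCoef q m k i * q ^ (((i : ℝ) - 2) * t)
      = ∑ i ∈ Finset.range (k + 1),
          c2 q m (i + 2) * aCoef q m k (i + 2) * q ^ ((i : ℝ) * t) := by
    rw [show k + 3 = (k + 2) + 1 from rfl, Finset.sum_range_succ', c2_zero,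
      show k + 2 = (k + 1) + 1 from rfl, Finset.sum_range_succ', c2_one q m hq]
    simp only [zero_mul, mul_zero, add_zero]
    apply Finset.sum_congr rfl
    intro i _
    have e : ((i + 1 + 1 : ℕ) : ℝ) - 2 = (i : ℝ) := by push_cast; ring
    rw [show i + 1 + 1 = i + 2 from rfl] at e ⊢
    rw [e]
  rw [h0, h1, h2, ← Finset.sum_add_distrib, ← Finset.sum_add_distrib]
  apply Finset.sum_eq_zero
  intro i _
  have h := recA q m hq k i
  linear_combination (q ^ ((i : ℝ) * t)) * h

theorem bracket (q m : ℝ) (hq : 1 < q) (k : ℕ) (t : ℝ) :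
    (1 - q ^ (-t)) * (1 - q ^ (-m - t)) * Qx q m k (t - 1)
      + (1 - (1 - q ^ (-t)) * (1 - q ^ (-m - t)) - q ^ (-1 - 2 * t - m)) * Qx q m k t
      + q ^ (-1 - 2 * t - m) * Qx q m k (t + 1)
    = q ^ (-(k : ℝ)) * Qx q m k t := by
  rw [← sub_eq_zero, ← sumS1 q m hq k t]
  simp only [Qx, Finset.mul_sum, ← Finset.sum_sub_distrib, ← Finset.sum_add_distrib]
  apply Finset.sum_congr rfl
  intro i _
  linear_combination (aCoef q m k i) * Gident q m hq k i t

theorem Qx_eq (q m : ℝ) (k : ℕ) (t : ℝ) :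
    Qx q m k t = ∑ i ∈ Finset.range (k + 1), aCoef q m k i * q ^ ((i : ℝ) * t) := by
  rw [Qx, show k + 3 = (k + 2) + 1 from rfl, Finset.sum_range_succ,
    show k + 2 = (k + 1) + 1 from rfl, Finset.sum_range_succ,
    aCoef_gt q m k (k + 1) (by omega), aCoef_gt q m k (k + 2) (by omega)]
  ring



theorem fac1 (q : ℝ) (hq : 1 < q) (j : ℕ) : 0 < 1 - q ^ (-((j : ℝ) + 1)) := by
  have h : q ^ (-((j : ℝ) + 1)) < 1 := by
    apply Real.rpow_lt_one_of_one_lt_of_neg hq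
    have : (0:ℝ) ≤ (j:ℝ) := Nat.cast_nonneg j
    linarith
  linarith

theorem fac2 (q m : ℝ) (hq : 1 < q) (hm : -1 < m) (j : ℕ) :
    0 < 1 - q ^ (-m - ((j : ℝ) + 1)) := by
  have h : q ^ (-m - ((j : ℝ) + 1)) < 1 := by
    apply Real.rpow_lt_one_of_one_lt_of_neg hq
    have : (0:ℝ) ≤ (j:ℝ) := Nat.cast_nonneg j
    linarith
  linarith

theorem prod1_pos (q : ℝ) (hq : 1 < q) (n : ℕ) :
    0 < ∏ j ∈ Finset.range n, (1 - q ^ (-((j : ℝ) + 1))) :=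
  Finset.prod_pos fun j _ => fac1 q hq j

theorem prod2_pos (q m : ℝ) (hq : 1 < q) (hm : -1 < m) (n : ℕ) :
    0 < ∏ j ∈ Finset.range n, (1 - q ^ (-m - ((j : ℝ) + 1))) :=
  Finset.prod_pos fun j _ => fac2 q m hq hm j

theorem piWt_pos (q m : ℝ) (hq : 1 < q) (hm : -1 < m) (i : ℕ) : 0 < piWt q m i :=
  div_pos (Real.rpow_pos_of_pos (lt_trans one_pos hq) _)
    (mul_pos (prod1_pos q hq i) (prod2_pos q m hq hm i))

theorem rev (q m : ℝ) (hq : 1 < q) (hm : -1 < m) (n : ℕ) :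
    piWt q m n * q ^ (-1 - 2 * (n : ℝ) - m)
      = piWt q m (n + 1) * ((1 - q ^ (-((n : ℝ) + 1))) * (1 - q ^ (-m - ((n : ℝ) + 1)))) := by
  have hq0 : (0:ℝ) < q := lt_trans one_pos hq
  have hexp : q ^ (-((((n:ℝ)) + 1) * ((((n:ℝ)) + 1) + m)))
      = q ^ (-((n:ℝ) * ((n:ℝ) + m))) * q ^ (-1 - 2 * (n:ℝ) - m) := by
    rw [← Real.rpow_add hq0]; congr 1; ring
  have gen : ∀ (N E P1 P2 f1 f2 : ℝ), P1 ≠ 0 → P2 ≠ 0 → f1 ≠ 0 → f2 ≠ 0 →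
      N / (P1 * P2) * E = N * E / (P1 * f1 * (P2 * f2)) * (f1 * f2) := by
    intro N E P1 P2 f1 f2 h1 h2 h3 h4
    field_simp
  rw [piWt, piWt, Finset.prod_range_succ, Finset.prod_range_succ]
  push_cast
  rw [hexp]
  exact gen _ _ _ _ _ _ (ne_of_gt (prod1_pos q hq n)) (ne_of_gt (prod2_pos q m hq hm n))
    (ne_of_gt (fac1 q hq n)) (ne_of_gt (fac2 q m hq hm n))

theorem summPiWt (q m : ℝ) (hq : 1 < q) (hm : -1 < m) : Summable (piWt q m) := by
  have hq0 : (0:ℝ) < q := lt_trans one_pos hq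
  apply summable_of_ratio_norm_eventually_le (r := 1/2) (by norm_num)
  have hc1 : 0 < 1 - q ^ (-(1:ℝ)) := by have := fac1 q hq 0; norm_num at this; linarith
  have hc2 : 0 < 1 - q ^ (-m - 1) := by have := fac2 q m hq hm 0; norm_num at this; linarith
  have hc : 0 < (1 - q ^ (-(1:ℝ))) * (1 - q ^ (-m - 1)) := mul_pos hc1 hc2
  have hrw : ∀ n : ℕ, q ^ (-1 - 2 * (n:ℝ) - m) = q ^ (-1 - m : ℝ) * (q ^ ((-2):ℝ)) ^ n := by
    intro n
    rw [← Real.rpow_natCast (q ^ ((-2):ℝ)) n, ← Real.rpow_mul (le_of_lt hq0),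
      ← Real.rpow_add hq0]
    congr 1; ring
  have htend : Filter.Tendsto (fun n : ℕ => q ^ (-1 - 2 * (n:ℝ) - m)) Filter.atTop (nhds 0) := by
    simp only [hrw]
    have hr0 : (0:ℝ) ≤ q ^ ((-2):ℝ) := (Real.rpow_pos_of_pos hq0 _).le
    have hr1 : q ^ ((-2):ℝ) < 1 := Real.rpow_lt_one_of_one_lt_of_neg hq (by norm_num)
    have := (tendsto_pow_atTop_nhds_zero_of_lt_one hr0 hr1).const_mul (q ^ (-1 - m : ℝ))
    simpa using this
  have hev := htend.eventually_lt_const (show (0:ℝ) < ((1 - q ^ (-(1:ℝ))) * (1 - q ^ (-m - 1))) / 2 by positivity)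
  filter_upwards [hev] with n hn
  have hp0 := piWt_pos q m hq hm n
  have hp1 := piWt_pos q m hq hm (n + 1)
  rw [Real.norm_eq_abs, Real.norm_eq_abs, abs_of_pos hp1, abs_of_pos hp0]
  have hrev := rev q m hq hm n
  have hDc : (1 - q ^ (-(1:ℝ))) * (1 - q ^ (-m - 1))
      ≤ (1 - q ^ (-((n:ℝ) + 1))) * (1 - q ^ (-m - ((n:ℝ) + 1))) := by
    have e1 : q ^ (-((n:ℝ) + 1)) ≤ q ^ (-(1:ℝ)) := by
      apply (Real.rpow_le_rpow_left_iff hq).mpr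
      have : (0:ℝ) ≤ (n:ℝ) := Nat.cast_nonneg n
      linarith
    have e2 : q ^ (-m - ((n:ℝ) + 1)) ≤ q ^ (-m - 1) := by
      apply (Real.rpow_le_rpow_left_iff hq).mpr
      have : (0:ℝ) ≤ (n:ℝ) := Nat.cast_nonneg n
      linarith
    nlinarith [fac1 q hq n, fac2 q m hq hm n,
      mul_nonneg (sub_nonneg.mpr e1) (sub_nonneg.mpr e2)]
  -- piWt (n+1) * D = piWt n * E with E < c/2, D ≥ c
  have s1 := mul_le_mul_of_nonneg_left hDc hp1.le
  have s2 := mul_lt_mul_of_pos_left hn hp0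
  nlinarith [s1, s2, hrev, hc, hp0, hp1]



theorem exists_good_l (q : ℝ) (hq : 1 < q) (k : ℕ) (a : ℕ → ℝ) (hak : a k ≠ 0) :
    ∃ l : ℕ, (∑ i ∈ Finset.range (k + 1), a i * q ^ ((i : ℝ) * (l : ℝ))) ≠ 0 := by
  have hq0 : (0:ℝ) < q := lt_trans one_pos hq
  set p : Polynomial ℝ := ∑ i ∈ Finset.range (k + 1), Polynomial.C (a i) * Polynomial.X ^ i
    with hp
  have hpc : p.coeff k = a k := by
    rw [hp, Polynomial.finset_sum_coeff]
    simp only [Polynomial.coeff_C_mul, Polynomial.coeff_X_pow, mul_ite, mul_one, mul_zero]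
    rw [Finset.sum_ite_eq]
    simp
  have hpne : p ≠ 0 := by
    intro h
    rw [h, Polynomial.coeff_zero] at hpc
    exact hak hpc.symm
  have hfin : {x : ℝ | p.IsRoot x}.Finite := Polynomial.finite_setOf_isRoot hpne
  have hinj : Function.Injective (fun l : ℕ => q ^ (l : ℝ)) := by
    have hsm : StrictMono (fun l : ℕ => q ^ (l : ℝ)) := fun x y hxy =>
      (Real.rpow_lt_rpow_left_iff hq).mpr (by exact_mod_cast hxy)
    exact hsm.injective
  have hinfin : (Set.range fun l : ℕ => q ^ (l : ℝ)).Infinite :=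
    Set.infinite_range_of_injective hinj
  by_contra h
  push_neg at h
  apply hinfin (Set.Finite.subset hfin ?_)
  rintro x ⟨l, rfl⟩
  show p.IsRoot (q ^ (l : ℝ))
  have heval : p.eval (q ^ ((l : ℕ) : ℝ))
      = ∑ i ∈ Finset.range (k + 1), a i * q ^ ((i : ℝ) * (l : ℝ)) := by
    rw [hp, Polynomial.eval_finset_sum]
    apply Finset.sum_congr rfl
    intro i _
    rw [Polynomial.eval_mul, Polynomial.eval_C, Polynomial.eval_pow, Polynomial.eval_X,
      ← Real.rpow_natCast (q ^ ((l : ℕ) : ℝ)) i, ← Real.rpow_mul (le_of_lt hq0),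
      mul_comm ((l : ℕ) : ℝ) ((i : ℕ) : ℝ)]
  show p.eval _ = 0
  rw [heval]
  exact h l


end Stmt5Aux


/-- For each `k ≥ 0` there are coefficients `a_0, …, a_k` (with the convention
`a_{k+1} = a_{k+2} = 0`) with `a_k ≠ 0`, satisfying the stated recurrence, such that the nonzero
sequence `ν(l) = π_m(l)·Σ_{i=0}^{k} a_i q^{il}` is an eigenvector of `P_m` with eigenvalue
`q^{-k}`. -/
theorem stmt5 (q m : ℝ) (hq : 1 < q) (hm : -1 < m) (k : ℕ) :
    ∃ (a : ℕ → ℝ) (ν : ℕ → ℝ),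
      a k ≠ 0 ∧ a (k + 1) = 0 ∧ a (k + 2) = 0 ∧
      (∀ i : ℕ, i ≤ k →
        (q ^ (-(i : ℝ)) - q ^ (-(k : ℝ))) * a i
          - (1 + q ^ (-m)) * (q ^ (-1 - (i : ℝ)) - 1) * a (i + 1)
          + (q ^ (-2 - (i : ℝ) - m) - q ^ (-m) + q ^ ((i : ℝ) + 1 - m) - q ^ (-1 - m))
              * a (i + 2) = 0) ∧
      (∀ l : ℕ, ν l = piM q m l * ∑ i ∈ Finset.range (k + 1), a i * q ^ ((i : ℝ) * (l : ℝ))) ∧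
      ν ≠ 0 ∧
      (∀ l : ℕ,
        (if l = 0 then 0 else ν (l - 1) * Pm q m (l - 1) l)
          + ν l * Pm q m l l + ν (l + 1) * Pm q m (l + 1) l
        = q ^ (-(k : ℝ)) * ν l) := by
  have hq0 : (0:ℝ) < q := lt_trans one_pos hq
  refine ⟨Stmt5Aux.aCoef q m k,
    fun l => piM q m l * ∑ i ∈ Finset.range (k + 1),
      Stmt5Aux.aCoef q m k i * q ^ ((i : ℝ) * (l : ℝ)),
    ?_, ?_, ?_, ?_, fun l => rfl, ?_, ?_⟩
  · rw [Stmt5Aux.aCoef_k]; norm_num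
  · exact Stmt5Aux.aCoef_gt q m k _ (by omega)
  · exact Stmt5Aux.aCoef_gt q m k _ (by omega)
  · intro i hi
    have h := Stmt5Aux.recA q m hq k i
    simp only [Stmt5Aux.c0] at h
    have hc1 : Stmt5Aux.c1 q m (i + 1) = -((1 + q ^ (-m)) * (q ^ (-1 - (i:ℝ)) - 1)) := by
      rw [Stmt5Aux.c1]
      push_cast
      rw [show -((i:ℝ) + 1) = -1 - (i:ℝ) by ring]
    have hc2 : Stmt5Aux.c2 q m (i + 2)
        = q ^ (-2 - (i:ℝ) - m) - q ^ (-m) + q ^ ((i:ℝ) + 1 - m) - q ^ (-1 - m) := by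
      rw [Stmt5Aux.c2]
      push_cast
      have e1 : q ^ (-((i:ℝ) + 2)) * q ^ (-m) = q ^ (-2 - (i:ℝ) - m) := by
        rw [← Real.rpow_add hq0]; congr 1; ring
      have e2 : q ^ (-1 - m : ℝ) * q ^ ((i:ℝ) + 2) = q ^ ((i:ℝ) + 1 - m) := by
        rw [← Real.rpow_add hq0]; congr 1; ring
      linear_combination e1 + e2
    rw [hc1, hc2] at h
    linear_combination h
  · obtain ⟨l, hl⟩ := Stmt5Aux.exists_good_l q hq k (Stmt5Aux.aCoef q m k)
      (by rw [Stmt5Aux.aCoef_k]; norm_num)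
    intro hzero
    have h := congrFun hzero l
    simp only [Pi.zero_apply] at h
    have hts : 0 < ∑' j : ℕ, piWt q m j :=
      Summable.tsum_pos (Stmt5Aux.summPiWt q m hq hm) (fun j => (Stmt5Aux.piWt_pos q m hq hm j).le) 0
        (Stmt5Aux.piWt_pos q m hq hm 0)
    have hpiM : piM q m l ≠ 0 := by
      rw [piM]
      exact mul_ne_zero (inv_ne_zero (ne_of_gt hts)) (ne_of_gt (Stmt5Aux.piWt_pos q m hq hm l))
    exact hl ((mul_eq_zero.mp h).resolve_left hpiM)
  · intro l
    have hQ : ∀ j : ℕ, (∑ i ∈ Finset.range (k + 1),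
        Stmt5Aux.aCoef q m k i * q ^ ((i : ℝ) * (j : ℝ))) = Stmt5Aux.Qx q m k (j : ℝ) :=
      fun j => (Stmt5Aux.Qx_eq q m k _).symm
    simp only [piM, hQ]
    cases l with
    | zero =>
      rw [if_pos rfl]
      have hb := Stmt5Aux.bracket q m hq k 0
      have hrev0 := Stmt5Aux.rev q m hq hm 0
      simp only [Pm]
      norm_num
      norm_num at hb hrev0
      linear_combination ((∑' j : ℕ, piWt q m j)⁻¹ * piWt q m 0) * hb
        - ((∑' j : ℕ, piWt q m j)⁻¹ * Stmt5Aux.Qx q m k 1) * hrev0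
    | succ n =>
      rw [if_neg (Nat.succ_ne_zero n)]
      have hb := Stmt5Aux.bracket q m hq k ((n:ℝ) + 1)
      have hrev1 := Stmt5Aux.rev q m hq hm n
      have hrev2 := Stmt5Aux.rev q m hq hm (n + 1)
      have hPa : Pm q m n (n+1) = q ^ (-1 - 2*(n:ℝ) - m) := by
        simp only [Pm]
        simp only [if_true, eq_self_iff_true]
      have hPb : Pm q m (n+1) (n+1) = 1 - (1 - q ^ (-((n:ℝ)+1))) * (1 - q ^ (-m - ((n:ℝ)+1)))
          - q ^ (-1 - 2*((n:ℝ)+1) - m) := by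
        simp only [Pm]
        rw [if_neg (by omega)]
        simp only [if_true, eq_self_iff_true]
        push_cast
        ring_nf
      have hPc : Pm q m (n+1+1) (n+1) = (1 - q ^ (-((n:ℝ)+2))) * (1 - q ^ (-m - ((n:ℝ)+2))) := by
        simp only [Pm]
        rw [if_neg (by omega), if_neg (by omega)]
        simp only [if_true, eq_self_iff_true]
        push_cast
        ring_nf
      rw [show n + 1 - 1 = n from rfl, hPa, hPb, hPc]
      rw [show (n:ℝ) + 1 - 1 = (n:ℝ) by ring, show (n:ℝ) + 1 + 1 = (n:ℝ) + 2 by ring] at hb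
      push_cast at hrev2 ⊢
      rw [show (n:ℝ) + 1 + 1 = (n:ℝ) + 2 by ring] at hrev2 ⊢
      linear_combination ((∑' j : ℕ, piWt q m j)⁻¹ * piWt q m (n + 1)) * hb
        + ((∑' j : ℕ, piWt q m j)⁻¹ * Stmt5Aux.Qx q m k (n:ℝ)) * hrev1
        - ((∑' j : ℕ, piWt q m j)⁻¹ * Stmt5Aux.Qx q m k ((n:ℝ) + 2)) * hrev2
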